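/- If an infinite binary sequence x is not bi-immune, then x is Tadaki totally predictable. -/
import Mathlib


/-- The prefix `x₁ … x_n` of an infinite binary sequence (0-indexed: `x 0, …, x (n-1)`). -/
def pre (x : ℕ → Bool) (n : ℕ) : List Bool := (List.range n).map x

/-- `x` is bi-immune: it contains no infinite computable subsequence, i.e. there is
no infinite computable set `K` and computable `f` with `f k = x k` for all `k ∈ K`. -/
def BiImmune (x : ℕ → Bool) : Prop :=
  ¬ ∃ K : Set ℕ, K.Infinite ∧ ComputablePred (· ∈ K) ∧
      ∃ f : ℕ → Bool, Computable f ∧ ∀ k ∈ K, f k = x k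

/-- `x` is Tadaki totally predictable: there is a total computable
`F : {0,1}* → {0,1,W}` (here `Option Bool`, `none` = W) such that on every prefix
of `x`, `F` either correctly predicts the next bit or withholds, and `F` predicts
on infinitely many prefixes. -/
def TadakiTotallyPredictable (x : ℕ → Bool) : Prop :=
  ∃ F : List Bool → Option Bool, Computable F ∧
    (∀ n, F (pre x n) = some (x n) ∨ F (pre x n) = none) ∧
    {n : ℕ | F (pre x n) ≠ none}.Infinite

theorem not_biImmune_tadakiTotallyPredictable (x : ℕ → Bool) (h : ¬ BiImmune x) :
    TadakiTotallyPredictable x := by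
  rw [BiImmune, not_not] at h
  obtain ⟨K, hKinf, hKcomp, f, hf, hfx⟩ := h
  obtain ⟨_, hdec⟩ := hKcomp
  refine ⟨fun L => bif decide (L.length ∈ K) then some (f L.length) else none, ?_, ?_, ?_⟩
  · exact Computable.cond (hdec.comp Computable.list_length)
      (Computable.option_some.comp (hf.comp Computable.list_length))
      (Computable.const none)
  · intro n
    have hlen : (pre x n).length = n := by simp [pre]
    by_cases hn : n ∈ K
    · left; simp [hlen, hn, hfx n hn]
    · right; simp [hlen, hn]
  · have : {n : ℕ | (fun L => bif decide (L.length ∈ K) then some (f L.length) else none)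
        (pre x n) ≠ none} = K := by
      ext n
      have hlen : (pre x n).length = n := by simp [pre]
      by_cases hn : n ∈ K <;> simp [hlen, hn]
    rwa [this]
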